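/- Let X be a compact space and R a range set. The space UM(X,R) of continuous R-valued pseudo-ultrametrics on X, equipped with the ultrametric UD(d,e) = inf{ε : d(x,y) ≤ max(e(x,y), ε) and e(x,y) ≤ max(d(x,y), ε) for all x,y ∈ X}, is a complete metric space. -/

import Mathlib

/-- Continuous `R`-valued pseudo-ultrametrics on `X`. -/
structure IsContPseudoUltrametric {X : Type*} [TopologicalSpace X]
    (R : Set ℝ) (d : X → X → ℝ) : Prop where
  mem : ∀ x y, d x y ∈ R
  nonneg : ∀ x y, 0 ≤ d x y
  refl : ∀ x, d x x = 0
  symm : ∀ x y, d x y = d y x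
  ultra : ∀ x y z, d x y ≤ max (d x z) (d z y)
  cont : Continuous fun p : X × X => d p.1 p.2

/-- The ultrametric `UD` on the space of continuous pseudo-ultrametrics. -/
noncomputable def UD {X : Type*} (d e : X → X → ℝ) : ℝ :=
  sInf {ε : ℝ | 0 ≤ ε ∧ ∀ x y : X, d x y ≤ max (e x y) ε ∧ e x y ≤ max (d x y) ε}


def USet {X : Type*} (d e : X → X → ℝ) : Set ℝ :=
  {ε : ℝ | 0 ≤ ε ∧ ∀ x y : X, d x y ≤ max (e x y) ε ∧ e x y ≤ max (d x y) ε}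

theorem UD_eq {X : Type*} (d e : X → X → ℝ) : UD d e = sInf (USet d e) := rfl

theorem bddBelow_USet {X : Type*} (d e : X → X → ℝ) : BddBelow (USet d e) :=
  ⟨0, fun _ hx => hx.1⟩

theorem USet_nonempty {X : Type*} {d e : X → X → ℝ}
    (hdb : ∃ C, ∀ x y, d x y ≤ C) (heb : ∃ C, ∀ x y, e x y ≤ C) :
    (USet d e).Nonempty := by
  obtain ⟨C1, h1⟩ := hdb
  obtain ⟨C2, h2⟩ := heb
  refine ⟨max 0 (max C1 C2), le_max_left _ _, fun x y => ⟨?_, ?_⟩⟩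
  · exact le_max_of_le_right (le_max_of_le_right ((h1 x y).trans (le_max_left _ _)))
  · exact le_max_of_le_right (le_max_of_le_right ((h2 x y).trans (le_max_right _ _)))

theorem bound_of_cont {X : Type*} [TopologicalSpace X] [CompactSpace X]
    {d : X → X → ℝ} (hc : Continuous fun p : X × X => d p.1 p.2) :
    ∃ C, ∀ x y, d x y ≤ C := by
  obtain ⟨C, hC⟩ := (isCompact_range hc).bddAbove
  exact ⟨C, fun x y => hC ⟨(x, y), rfl⟩⟩

theorem stmt_17 {X : Type*} [TopologicalSpace X] [CompactSpace X]
    (R : Set ℝ) (hR : R ⊆ Set.Ici (0 : ℝ)) (h0 : (0 : ℝ) ∈ R)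
    (d : ℕ → X → X → ℝ)
    (hd : ∀ n, IsContPseudoUltrametric R (d n))
    (hCauchy : ∀ ε > (0 : ℝ), ∃ N, ∀ m ≥ N, ∀ n ≥ N, UD (d m) (d n) < ε) :
    ∃ e : X → X → ℝ, IsContPseudoUltrametric R e ∧
      ∀ ε > (0 : ℝ), ∃ N, ∀ n ≥ N, UD (d n) e < ε := by
  classical
  -- boundedness of each d n
  have hbound : ∀ n, ∃ C, ∀ x y, d n x y ≤ C := fun n => bound_of_cont (hd n).cont
  -- key: extraction of pointwise conditions from UD-Cauchyness
  have key : ∀ ε : ℝ, 0 < ε → ∃ N, ∀ m, N ≤ m → ∀ n, N ≤ n → ∀ x y : X,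
      d m x y ≤ max (d n x y) ε ∧ (ε < d m x y → d m x y = d n x y) := by
    intro ε hε
    obtain ⟨N, hN⟩ := hCauchy ε hε
    refine ⟨N, fun m hm n hn => ?_⟩
    have hlt : UD (d m) (d n) < ε := hN m hm n hn
    rw [UD_eq] at hlt
    obtain ⟨ε', hε'mem, hε'lt⟩ :=
      (csInf_lt_iff (bddBelow_USet _ _)
        (USet_nonempty (hbound m) (hbound n))).1 hlt
    intro x y
    obtain ⟨h1, h2⟩ := hε'mem.2 x y
    constructor
    · exact h1.trans (max_le_max le_rfl hε'lt.le)
    · intro hgt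
      have hmn : d m x y ≤ d n x y := by
        rcases le_max_iff.1 h1 with h | h
        · exact h
        · linarith
      have hnm : d n x y ≤ d m x y := by
        rcases le_max_iff.1 h2 with h | h
        · exact h
        · linarith
      linarith
  -- pointwise distance bound
  have habs : ∀ ε : ℝ, 0 < ε → ∃ N, ∀ m, N ≤ m → ∀ n, N ≤ n → ∀ x y : X,
      |d m x y - d n x y| ≤ ε := by
    intro ε hε
    obtain ⟨N, hN⟩ := key ε hε
    refine ⟨N, fun m hm n hn x y => ?_⟩
    by_cases h1 : ε < d m x y
    · rw [(hN m hm n hn x y).2 h1]; simpa using hε.le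
    · by_cases h2 : ε < d n x y
      · rw [(hN n hn m hm x y).2 h2]; simpa [abs_sub_comm] using hε.le
      · push_neg at h1 h2
        have := (hd m).nonneg x y
        have := (hd n).nonneg x y
        rw [abs_le]; constructor <;> linarith
  -- pointwise limits exist
  have hcau : ∀ x y : X, ∃ l : ℝ, Filter.Tendsto (fun n => d n x y) Filter.atTop (nhds l) := by
    intro x y
    apply cauchySeq_tendsto_of_complete
    rw [Metric.cauchySeq_iff]
    intro ε hε
    obtain ⟨N, hN⟩ := habs (ε / 2) (by linarith)
    refine ⟨N, fun m hm n hn => ?_⟩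
    rw [Real.dist_eq]
    have := hN m hm n hn x y
    linarith
  choose e he using hcau
  -- uniform convergence bound
  have hunif : ∀ ε : ℝ, 0 < ε → ∃ N, ∀ n, N ≤ n → ∀ x y : X,
      |e x y - d n x y| ≤ ε := by
    intro ε hε
    obtain ⟨N, hN⟩ := habs ε hε
    refine ⟨N, fun n hn x y => ?_⟩
    have htend : Filter.Tendsto (fun m => |d m x y - d n x y|) Filter.atTop
        (nhds |e x y - d n x y|) := (((he x y).sub_const _).abs)
    refine le_of_tendsto htend ?_
    filter_upwards [Filter.eventually_ge_atTop N] with m hm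
    exact hN m hm n hn x y
  -- stabilization: above level ε, d n and e agree
  have hstab : ∀ ε : ℝ, 0 < ε → ∃ N, ∀ n, N ≤ n → ∀ x y : X,
      (ε < d n x y → d n x y = e x y) ∧ (ε < e x y → d n x y = e x y) := by
    intro ε hε
    obtain ⟨N, hN⟩ := key ε hε
    have first : ∀ n, N ≤ n → ∀ x y : X, ε < d n x y → d n x y = e x y := by
      intro n hn x y hgt
      have : Filter.Tendsto (fun m => d m x y) Filter.atTop (nhds (d n x y)) := by
        apply Filter.Tendsto.congr' _ tendsto_const_nhds
        filter_upwards [Filter.eventually_ge_atTop N] with m hm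
        exact (hN n hn m hm x y).2 hgt
      exact tendsto_nhds_unique this (he x y)
    refine ⟨N, fun n hn x y => ⟨first n hn x y, fun hgt => ?_⟩⟩
    have hev : ∀ᶠ m in Filter.atTop, ε < d m x y :=
      (he x y).eventually (eventually_gt_nhds hgt)
    obtain ⟨m, hm1, hm2⟩ := (hev.and (Filter.eventually_ge_atTop N)).exists
    have hme : d m x y = e x y := first m hm2 x y hm1
    have : d m x y = d n x y := (hN m hm2 n hn x y).2 hm1
    rw [← hme, ← this]
  -- nonnegativity of e
  have henn : ∀ x y : X, 0 ≤ e x y := fun x y =>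
    ge_of_tendsto' (he x y) fun n => (hd n).nonneg x y
  refine ⟨e, ⟨?_, henn, ?_, ?_, ?_, ?_⟩, ?_⟩
  · -- mem
    intro x y
    by_cases h : e x y = 0
    · rw [h]; exact h0
    · have hpos : 0 < e x y := lt_of_le_of_ne (henn x y) (Ne.symm h)
      obtain ⟨N, hN⟩ := hstab (e x y / 2) (by linarith)
      have := (hN N le_rfl x y).2 (by linarith)
      rw [← this]
      exact (hd N).mem x y
  · -- refl
    intro x
    refine tendsto_nhds_unique ?_ (he x x) |>.symm
    · simp only [(hd _).refl]; exact (tendsto_const_nhds : Filter.Tendsto (fun _ : ℕ => (0:ℝ)) _ _)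
  · -- symm
    intro x y
    exact tendsto_nhds_unique ((he y x).congr fun n => ((hd n).symm y x)) (he x y) |>.symm
  · -- ultra
    intro x y z
    exact le_of_tendsto_of_tendsto' (he x y) ((he x z).max (he z y))
      fun n => (hd n).ultra x y z
  · -- continuity
    have : TendstoUniformly (fun n (p : X × X) => d n p.1 p.2)
        (fun p : X × X => e p.1 p.2) Filter.atTop := by
      rw [Metric.tendstoUniformly_iff]
      intro ε hε
      obtain ⟨N, hN⟩ := hunif (ε / 2) (by linarith)
      filter_upwards [Filter.eventually_ge_atTop N] with n hn p
      rw [Real.dist_eq]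
      have := hN n hn p.1 p.2
      linarith
    exact this.continuous (Filter.Eventually.of_forall fun n => (hd n).cont).frequently
  · -- convergence in UD
    intro ε hε
    obtain ⟨N, hN⟩ := hstab (ε / 2) (by linarith)
    refine ⟨N, fun n hn => ?_⟩
    have hmem : ε / 2 ∈ USet (d n) e := by
      refine ⟨by linarith, fun x y => ⟨?_, ?_⟩⟩
      · by_cases h : ε / 2 < d n x y
        · rw [(hN n hn x y).1 h]; exact le_max_left _ _
        · push_neg at h; exact le_max_of_le_right h
      · by_cases h : ε / 2 < e x y
        · rw [← (hN n hn x y).2 h]; exact le_max_left _ _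
        · push_neg at h; exact le_max_of_le_right h
    calc UD (d n) e ≤ ε / 2 := by
          rw [UD_eq]; exact csInf_le (bddBelow_USet _ _) hmem
      _ < ε := by linarith
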